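/- Assume that for every a ∈ A the set { d : ι →₀ ℕ | deg(d) = a } is finite (i.e. every A-graded component of the polynomial ring with deg x_i = α i is finite dimensional). Then the subsemigroup A_+ generated in A by the α i meets its negative only trivially: for every a ∈ A, if a lies in the additive submonoid of A generated by the set {α i : i ∈ ι} and −a also lies in that submonoid, then a = 0. -/

import Mathlib

variable {A : Type*} [AddCommGroup A] {ι : Type*} [Fintype ι]

/-- The `A`-degree of the monomial `x^d` in the grading determined by `deg x_i = α i`. -/
def monDeg (α : ι → A) (d : ι →₀ ℕ) : A :=
  ∑ i : ι, (d i) • (α i)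

lemma monDeg_add (α : ι → A) (d e : ι →₀ ℕ) :
    monDeg α (d + e) = monDeg α d + monDeg α e := by
  simp [monDeg, add_smul, Finset.sum_add_distrib]

lemma monDeg_smul (α : ι → A) (n : ℕ) (d : ι →₀ ℕ) :
    monDeg α (n • d) = n • monDeg α d := by
  induction n with
  | zero => simp [monDeg]
  | succ n ih => rw [succ_nsmul, succ_nsmul, monDeg_add, ih]

lemma monDeg_mem_closure (α : ι → A) (a : A) (ha : a ∈ AddSubmonoid.closure (Set.range α)) :
    ∃ d : ι →₀ ℕ, monDeg α d = a := by
  induction ha using AddSubmonoid.closure_induction with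
  | mem x hx =>
    obtain ⟨i, rfl⟩ := hx
    refine ⟨Finsupp.single i 1, ?_⟩
    rw [monDeg, Finset.sum_eq_single i]
    · simp
    · intro b _ hb; simp [Finsupp.single_apply, Ne.symm hb]
    · simp
  | zero => exact ⟨0, by simp [monDeg]⟩
  | add x y _ _ hx hy =>
    obtain ⟨d, rfl⟩ := hx
    obtain ⟨e, rfl⟩ := hy
    exact ⟨d + e, monDeg_add α d e⟩

/-- If every `A`-graded component of the polynomial ring is finite dimensional, then the
subsemigroup `A₊` generated by the `α i` meets its negative only trivially:
`A₊ ∩ (−A₊) = {0}`. -/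
theorem pos_cone_inter_neg_cone (α : ι → A)
    (hfin : ∀ a : A, {d : ι →₀ ℕ | monDeg α d = a}.Finite)
    (a : A) (ha : a ∈ AddSubmonoid.closure (Set.range α))
    (ha' : -a ∈ AddSubmonoid.closure (Set.range α)) : a = 0 := by
  obtain ⟨d, hd⟩ := monDeg_mem_closure α a ha
  obtain ⟨e, he⟩ := monDeg_mem_closure α (-a) ha'
  have hde : monDeg α (d + e) = 0 := by rw [monDeg_add, hd, he, add_neg_cancel]
  by_cases h : d + e = 0
  · have hd0 : d = 0 := by
      ext i
      have := DFunLike.congr_fun h i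
      simpa using (Nat.add_eq_zero.mp (by simpa using this)).1
    rw [← hd, hd0]
    simp [monDeg]
  · exfalso
    have hinj : Function.Injective (fun n : ℕ => n • (d + e)) := by
      intro m n hmn
      have := DFunLike.congr_fun hmn
      obtain ⟨i, hi⟩ : ∃ i, (d + e) i ≠ 0 := by
        by_contra hc
        push_neg at hc
        exact h (Finsupp.ext hc)
      have := this i
      simp only [Finsupp.smul_apply, smul_eq_mul] at this
      exact Nat.eq_of_mul_eq_mul_right (Nat.pos_of_ne_zero hi) this
    have : Set.InjOn (fun n : ℕ => n • (d + e)) Set.univ := hinj.injOn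
    have hsub : Set.range (fun n : ℕ => n • (d + e)) ⊆ {f : ι →₀ ℕ | monDeg α f = 0} := by
      rintro _ ⟨n, rfl⟩
      show monDeg α (n • (d + e)) = 0
      rw [monDeg_smul, hde, smul_zero]
    exact Set.infinite_range_of_injective hinj ((hfin 0).subset hsub)
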